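/- Let f_1, …, f_m : ℝ^d → ℝ be differentiable with L-Lipschitz gradients (L-smooth) and f := (1/m)∑_{i=1}^m f_i. Let β > 0, r ≥ 0, and let w, w_1, …, w_m be points and s_1, …, s_m be vectors with ‖s_i‖ ≤ r for each i. Define the update w⁺ := w − (β/m)∑_{i=1}^m ∇f_i(w_i + s_i). Then f(w⁺) ≤ f(w) + (L/2)‖w⁺ − w‖² + βL²r² + (βL²/m)∑_{i=1}^m ‖w_i − w‖² − (β/2)‖∇f(w)‖². -/

import Mathlib

set_option maxHeartbeats 1600000

open Finset InnerProductSpace in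
/-- Descent lemma for functions with Lipschitz gradient. -/
lemma descent_lemma_aux {E : Type*} [NormedAddCommGroup E] [InnerProductSpace ℝ E]
    [CompleteSpace E] (g : E → ℝ) (C : ℝ) (hg : Differentiable ℝ g)
    (hL : ∀ x y, ‖gradient g x - gradient g y‖ ≤ C * ‖x - y‖) (x y : E) :
    g y ≤ g x + inner ℝ (gradient g x) (y - x) + C / 2 * ‖y - x‖ ^ 2 := by
  set v := y - x with hv
  set A : ℝ := inner ℝ (gradient g x) v with hA
  set φ : ℝ → ℝ := fun t => g (x + t • v) - (t * A + C / 2 * ‖v‖ ^ 2 * t ^ 2) with hφ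
  have hder : ∀ t : ℝ, HasDerivAt φ
      ((inner ℝ (gradient g (x + t • v)) v : ℝ) - (A + C / 2 * ‖v‖ ^ 2 * (2 * t))) t := by
    intro t
    have hline : HasDerivAt (fun t : ℝ => x + t • v) v t := by
      simpa using ((hasDerivAt_id t).smul_const v).const_add x
    have h1 : HasDerivAt (fun t : ℝ => g (x + t • v))
        (inner ℝ (gradient g (x + t • v)) v : ℝ) t := by
      have := ((hg (x + t • v)).hasGradientAt.hasFDerivAt).comp_hasDerivAt t hline
      rw [toDual_apply_apply] at this
      exact this
    have h2 : HasDerivAt (fun t : ℝ => t * A) A t := by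
      simpa using (hasDerivAt_id t).mul_const A
    have h3 : HasDerivAt (fun t : ℝ => C / 2 * ‖v‖ ^ 2 * t ^ 2)
        (C / 2 * ‖v‖ ^ 2 * (2 * t)) t := by
      simpa using (hasDerivAt_pow 2 t).const_mul (C / 2 * ‖v‖ ^ 2)
    exact h1.sub (h2.add h3)
  have hmono : AntitoneOn φ (Set.Icc (0 : ℝ) 1) := by
    apply antitoneOn_of_deriv_nonpos (convex_Icc 0 1)
    · exact (Differentiable.continuous (fun t => (hder t).differentiableAt)).continuousOn
    · exact fun t _ => (hder t).differentiableAt.differentiableWithinAt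
    · intro t ht
      rw [interior_Icc] at ht
      rw [(hder t).deriv]
      have hinner : (inner ℝ (gradient g (x + t • v)) v : ℝ) - A
          = inner ℝ (gradient g (x + t • v) - gradient g x) v := by
        rw [inner_sub_left]
      have hb : (inner ℝ (gradient g (x + t • v) - gradient g x) v : ℝ)
          ≤ C * t * ‖v‖ ^ 2 := by
        calc (inner ℝ (gradient g (x + t • v) - gradient g x) v : ℝ)
            ≤ ‖gradient g (x + t • v) - gradient g x‖ * ‖v‖ := real_inner_le_norm _ _
          _ ≤ (C * ‖(x + t • v) - x‖) * ‖v‖ := by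
              have := hL (x + t • v) x
              nlinarith [norm_nonneg v, norm_nonneg (gradient g (x + t • v) - gradient g x)]
          _ = C * t * ‖v‖ ^ 2 := by
              rw [add_sub_cancel_left, norm_smul]
              simp [abs_of_pos ht.1]
              ring
      nlinarith [hinner]
  have key := hmono (Set.left_mem_Icc.2 zero_le_one) (Set.right_mem_Icc.2 zero_le_one)
    zero_le_one
  have h0 : φ 0 = g x := by simp [hφ]
  have h1 : φ 1 = g y - (A + C / 2 * ‖v‖ ^ 2) := by
    simp [hφ, hv]
  rw [h0, h1] at key
  have : ‖v‖ ^ 2 = ‖y - x‖ ^ 2 := by rw [hv]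
  linarith

open InnerProductSpace in
lemma gradient_const_mul_sum {E : Type*} [NormedAddCommGroup E] [InnerProductSpace ℝ E]
    [CompleteSpace E] (c : ℝ) {m : ℕ} (f : Fin m → E → ℝ)
    (hdiff : ∀ i, Differentiable ℝ (f i)) (w : E) :
    gradient (fun v => c * ∑ i, f i v) w = c • ∑ i, gradient (f i) w := by
  have h : HasGradientAt (fun v => c * ∑ i, f i v) (c • ∑ i, gradient (f i) w) w := by
    rw [hasGradientAt_iff_hasFDerivAt]
    have he : (toDual ℝ E) (c • ∑ i, gradient (f i) w)
        = c • ∑ i, (toDual ℝ E) (gradient (f i) w) := by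
      rw [map_smul, map_sum]
    rw [he]
    exact (HasFDerivAt.fun_sum fun i _ => ((hdiff i) w).hasGradientAt.hasFDerivAt).const_mul c
  exact h.gradient

/-- Deterministic one-round descent inequality of FedSMOO (Theorem 4.1 proof):
for `L`-smooth `f i`, `f = (1/m) ∑ i, f i`, perturbations `‖s i‖ ≤ r`, and the
global update `w⁺ = w - (β/m) ∑ i, ∇f i (w i + s i)`,
`f(w⁺) ≤ f(w) + (L/2)‖w⁺ - w‖² + βL²r² + (βL²/m) ∑ i, ‖w i - w‖² - (β/2)‖∇f(w)‖²`. -/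
theorem one_round_descent
    {d m : ℕ} (hm : 0 < m) (L β r : ℝ) (hβ : 0 < β) (hr : 0 ≤ r)
    (f : Fin m → EuclideanSpace ℝ (Fin d) → ℝ)
    (hdiff : ∀ i, Differentiable ℝ (f i))
    (hsmooth : ∀ i x y, ‖gradient (f i) x - gradient (f i) y‖ ≤ L * ‖x - y‖)
    (w : EuclideanSpace ℝ (Fin d))
    (wi s : Fin m → EuclideanSpace ℝ (Fin d))
    (hs : ∀ i, ‖s i‖ ≤ r) :
    (fun v => (m : ℝ)⁻¹ * ∑ i, f i v)
        (w - (β / (m : ℝ)) • ∑ i, gradient (f i) (wi i + s i))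
      ≤ (m : ℝ)⁻¹ * ∑ i, f i w
        + (L / 2) * ‖(w - (β / (m : ℝ)) • ∑ i, gradient (f i) (wi i + s i)) - w‖ ^ 2
        + β * L ^ 2 * r ^ 2
        + (β * L ^ 2 / (m : ℝ)) * ∑ i, ‖wi i - w‖ ^ 2
        - (β / 2) * ‖gradient (fun v => (m : ℝ)⁻¹ * ∑ i, f i v) w‖ ^ 2 := by
  have hm' : (0 : ℝ) < m := Nat.cast_pos.2 hm
  set g : EuclideanSpace ℝ (Fin d) → ℝ := fun v => (m : ℝ)⁻¹ * ∑ i, f i v with hgdef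
  have hgdiff : Differentiable ℝ g := by
    apply Differentiable.const_mul
    exact Differentiable.fun_sum fun i _ => hdiff i
  -- gradient of g at any point
  have hgrad : ∀ x, gradient g x = (m : ℝ)⁻¹ • ∑ i, gradient (f i) x := fun x =>
    gradient_const_mul_sum _ f hdiff x
  -- g is L-smooth
  have hgL : ∀ x y, ‖gradient g x - gradient g y‖ ≤ L * ‖x - y‖ := by
    intro x y
    rw [hgrad, hgrad, ← smul_sub, ← Finset.sum_sub_distrib, norm_smul]
    have hb : ‖∑ i, (gradient (f i) x - gradient (f i) y)‖ ≤ (m : ℝ) * (L * ‖x - y‖) := by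
      calc ‖∑ i, (gradient (f i) x - gradient (f i) y)‖
          ≤ ∑ i, ‖gradient (f i) x - gradient (f i) y‖ := norm_sum_le _ _
        _ ≤ ∑ _i : Fin m, L * ‖x - y‖ := Finset.sum_le_sum fun i _ => hsmooth i x y
        _ = (m : ℝ) * (L * ‖x - y‖) := by simp [mul_comm]
    have : ‖(m : ℝ)⁻¹‖ = (m : ℝ)⁻¹ := by
      rw [Real.norm_eq_abs, abs_of_pos (by positivity)]
    rw [this]
    calc (m : ℝ)⁻¹ * ‖∑ i, (gradient (f i) x - gradient (f i) y)‖
        ≤ (m : ℝ)⁻¹ * ((m : ℝ) * (L * ‖x - y‖)) := by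
          apply mul_le_mul_of_nonneg_left hb (by positivity)
      _ = L * ‖x - y‖ := by field_simp
  set S : EuclideanSpace ℝ (Fin d) := ∑ i, gradient (f i) (wi i + s i) with hS
  set P : EuclideanSpace ℝ (Fin d) := (m : ℝ)⁻¹ • S with hP
  set G : EuclideanSpace ℝ (Fin d) := gradient g w with hG
  set wp : EuclideanSpace ℝ (Fin d) := w - (β / (m : ℝ)) • S with hwp
  have hdiffwp : wp - w = -(β • P) := by
    rw [hwp, hP, sub_sub_cancel_left, smul_smul, div_eq_mul_inv]
  -- descent lemma
  have hdesc := descent_lemma_aux g L hgdiff hgL w wp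
  rw [hdiffwp] at hdesc
  -- the inner product term
  have hinner : (inner ℝ G (-(β • P)) : ℝ) = -β * inner ℝ G P := by
    rw [inner_neg_right, real_inner_smul_right]; ring
  -- bound ‖P - G‖²
  have hPG : ‖P - G‖ ^ 2 ≤ 2 * L ^ 2 * r ^ 2 + (2 * L ^ 2 / (m : ℝ)) * ∑ i, ‖wi i - w‖ ^ 2 := by
    have hPGeq : P - G = (m : ℝ)⁻¹ • ∑ i, (gradient (f i) (wi i + s i) - gradient (f i) w) := by
      rw [hP, hG, hgrad, ← smul_sub, Finset.sum_sub_distrib]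
    have hn1 : ‖P - G‖ ≤ (m : ℝ)⁻¹ * ∑ i, ‖gradient (f i) (wi i + s i) - gradient (f i) w‖ := by
      rw [hPGeq, norm_smul, Real.norm_eq_abs, abs_of_pos (by positivity)]
      exact mul_le_mul_of_nonneg_left (norm_sum_le _ _) (by positivity)
    have hsq : ‖P - G‖ ^ 2
        ≤ (m : ℝ)⁻¹ * ∑ i, ‖gradient (f i) (wi i + s i) - gradient (f i) w‖ ^ 2 := by
      have h1 : ‖P - G‖ ^ 2
          ≤ ((m : ℝ)⁻¹ * ∑ i, ‖gradient (f i) (wi i + s i) - gradient (f i) w‖) ^ 2 := by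
        apply pow_le_pow_left₀ (norm_nonneg _) hn1
      have h2 : (∑ i, ‖gradient (f i) (wi i + s i) - gradient (f i) w‖) ^ 2
          ≤ (m : ℝ) * ∑ i, ‖gradient (f i) (wi i + s i) - gradient (f i) w‖ ^ 2 := by
        simpa using sq_sum_le_card_mul_sum_sq
          (s := Finset.univ) (f := fun i => ‖gradient (f i) (wi i + s i) - gradient (f i) w‖)
      calc ‖P - G‖ ^ 2
          ≤ ((m : ℝ)⁻¹ * ∑ i, ‖gradient (f i) (wi i + s i) - gradient (f i) w‖) ^ 2 := h1
        _ = (m : ℝ)⁻¹ ^ 2 * (∑ i, ‖gradient (f i) (wi i + s i) - gradient (f i) w‖) ^ 2 := by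
            ring
        _ ≤ (m : ℝ)⁻¹ ^ 2 * ((m : ℝ) * ∑ i, ‖gradient (f i) (wi i + s i) - gradient (f i) w‖ ^ 2)
            := mul_le_mul_of_nonneg_left h2 (by positivity)
        _ = (m : ℝ)⁻¹ * ∑ i, ‖gradient (f i) (wi i + s i) - gradient (f i) w‖ ^ 2 := by
            field_simp
    have hterm : ∀ i, ‖gradient (f i) (wi i + s i) - gradient (f i) w‖ ^ 2
        ≤ 2 * L ^ 2 * (‖wi i - w‖ ^ 2 + r ^ 2) := by
      intro i
      have h1 : ‖gradient (f i) (wi i + s i) - gradient (f i) w‖ ≤ L * ‖wi i + s i - w‖ :=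
        hsmooth i _ _
      have h2 : ‖wi i + s i - w‖ ≤ ‖wi i - w‖ + r := by
        have : wi i + s i - w = (wi i - w) + s i := by abel
        rw [this]
        exact le_trans (norm_add_le _ _) (by linarith [hs i])
      have h3 : ‖gradient (f i) (wi i + s i) - gradient (f i) w‖ ^ 2
          ≤ (L * ‖wi i + s i - w‖) ^ 2 := pow_le_pow_left₀ (norm_nonneg _) h1 2
      have h4 : ‖wi i + s i - w‖ ^ 2 ≤ (‖wi i - w‖ + r) ^ 2 :=
        pow_le_pow_left₀ (norm_nonneg _) h2 2
      have h5 : L ^ 2 * ‖wi i + s i - w‖ ^ 2 ≤ L ^ 2 * (‖wi i - w‖ + r) ^ 2 :=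
        mul_le_mul_of_nonneg_left h4 (sq_nonneg L)
      have h6 : L ^ 2 * (‖wi i - w‖ + r) ^ 2 ≤ 2 * L ^ 2 * (‖wi i - w‖ ^ 2 + r ^ 2) := by
        nlinarith [mul_nonneg (sq_nonneg L) (sq_nonneg (‖wi i - w‖ - r))]
      calc ‖gradient (f i) (wi i + s i) - gradient (f i) w‖ ^ 2
          ≤ (L * ‖wi i + s i - w‖) ^ 2 := h3
        _ = L ^ 2 * ‖wi i + s i - w‖ ^ 2 := by ring
        _ ≤ L ^ 2 * (‖wi i - w‖ + r) ^ 2 := h5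
        _ ≤ 2 * L ^ 2 * (‖wi i - w‖ ^ 2 + r ^ 2) := h6
    have hsum : ∑ i, ‖gradient (f i) (wi i + s i) - gradient (f i) w‖ ^ 2
        ≤ ∑ i, 2 * L ^ 2 * (‖wi i - w‖ ^ 2 + r ^ 2) := Finset.sum_le_sum fun i _ => hterm i
    have hsum2 : ∑ i, 2 * L ^ 2 * (‖wi i - w‖ ^ 2 + r ^ 2)
        = 2 * L ^ 2 * (∑ i, ‖wi i - w‖ ^ 2) + (m : ℝ) * (2 * L ^ 2 * r ^ 2) := by
      rw [Finset.sum_congr rfl (fun i _ => mul_add (2 * L ^ 2) _ _), Finset.sum_add_distrib,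
        ← Finset.mul_sum]
      simp [mul_comm]
    calc ‖P - G‖ ^ 2
        ≤ (m : ℝ)⁻¹ * ∑ i, ‖gradient (f i) (wi i + s i) - gradient (f i) w‖ ^ 2 := hsq
      _ ≤ (m : ℝ)⁻¹ * (2 * L ^ 2 * (∑ i, ‖wi i - w‖ ^ 2) + (m : ℝ) * (2 * L ^ 2 * r ^ 2)) := by
          apply mul_le_mul_of_nonneg_left _ (by positivity)
          rw [← hsum2]; exact hsum
      _ = 2 * L ^ 2 * r ^ 2 + (2 * L ^ 2 / (m : ℝ)) * ∑ i, ‖wi i - w‖ ^ 2 := by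
          field_simp; ring
  -- lower bound on inner ℝ G P
  have hGP : (inner ℝ G P : ℝ) ≥ (1 / 2) * ‖G‖ ^ 2 - (1 / 2) * ‖P - G‖ ^ 2 := by
    have h1 : (inner ℝ G P : ℝ) = ‖G‖ ^ 2 + inner ℝ G (P - G) := by
      rw [inner_sub_right, real_inner_self_eq_norm_sq]; ring
    have h2 : (inner ℝ G (P - G) : ℝ) ≥ -(‖G‖ * ‖P - G‖) :=
      (abs_le.1 (abs_real_inner_le_norm G (P - G))).1
    have h3 : ‖G‖ * ‖P - G‖ ≤ (1 / 2) * ‖G‖ ^ 2 + (1 / 2) * ‖P - G‖ ^ 2 := by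
      nlinarith [sq_nonneg (‖G‖ - ‖P - G‖)]
    linarith
  -- combine
  have hfinal : (inner ℝ G (-(β • P)) : ℝ)
      ≤ -(β / 2) * ‖G‖ ^ 2 + β * L ^ 2 * r ^ 2 + (β * L ^ 2 / (m : ℝ)) * ∑ i, ‖wi i - w‖ ^ 2 := by
    rw [hinner]
    have h1 : -β * (inner ℝ G P : ℝ) ≤ -β * ((1 / 2) * ‖G‖ ^ 2 - (1 / 2) * ‖P - G‖ ^ 2) := by
      apply mul_le_mul_of_nonpos_left hGP (by linarith)
    have h2 : (β / 2) * ‖P - G‖ ^ 2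
        ≤ β * L ^ 2 * r ^ 2 + (β * L ^ 2 / (m : ℝ)) * ∑ i, ‖wi i - w‖ ^ 2 := by
      have := mul_le_mul_of_nonneg_left hPG (le_of_lt (half_pos hβ))
      calc (β / 2) * ‖P - G‖ ^ 2
          ≤ (β / 2) * (2 * L ^ 2 * r ^ 2 + (2 * L ^ 2 / (m : ℝ)) * ∑ i, ‖wi i - w‖ ^ 2) := this
        _ = β * L ^ 2 * r ^ 2 + (β * L ^ 2 / (m : ℝ)) * ∑ i, ‖wi i - w‖ ^ 2 := by ring
    have h1' : -β * ((1 / 2) * ‖G‖ ^ 2 - (1 / 2) * ‖P - G‖ ^ 2)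
        = -(β / 2) * ‖G‖ ^ 2 + (β / 2) * ‖P - G‖ ^ 2 := by ring
    linarith
  show g wp ≤ g w + (L / 2) * ‖wp - w‖ ^ 2 + β * L ^ 2 * r ^ 2
      + (β * L ^ 2 / (m : ℝ)) * ∑ i, ‖wi i - w‖ ^ 2 - (β / 2) * ‖G‖ ^ 2
  rw [hdiffwp]
  calc g wp ≤ g w + (inner ℝ G (-(β • P)) : ℝ) + L / 2 * ‖-(β • P)‖ ^ 2 := hdesc
    _ ≤ g w + (-(β / 2) * ‖G‖ ^ 2 + β * L ^ 2 * r ^ 2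
        + (β * L ^ 2 / (m : ℝ)) * ∑ i, ‖wi i - w‖ ^ 2) + L / 2 * ‖-(β • P)‖ ^ 2 := by
        linarith
    _ = g w + (L / 2) * ‖-(β • P)‖ ^ 2 + β * L ^ 2 * r ^ 2
        + (β * L ^ 2 / (m : ℝ)) * ∑ i, ‖wi i - w‖ ^ 2 - (β / 2) * ‖G‖ ^ 2 := by ring
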